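/- Let H₀, H₁ be Hilbert spaces, C and D densely defined closed operators from H₀ to H₁ with dom(C) ∩ dom(D) dense. For each n ∈ ℕ let Lₙ ∈ L(H₁), Rₙ ∈ L(H₀) with Rₙ[dom(C)∩dom(D)] ⊆ dom(C)∩dom(D) and [Lₙ, C+D, Rₙ] continuous. Assume (C+D)* Lₙ* = (C* + D*) Lₙ* for each n, that Rₙ* → 1 and Lₙ* → 1 strongly, and that [Lₙ, C+D, Rₙ]* → 0 strongly as n → ∞. Then cl(C* + D*) = (C+D)*. -/

import Mathlib

open Filter Topology

noncomputable section

open LinearPMap in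
/-- The adjoint of a densely defined operator is closed. -/
theorem LinearPMap.adjoint_isClosed_aux {E F : Type*}
    [NormedAddCommGroup E] [InnerProductSpace ℝ E] [CompleteSpace E]
    [NormedAddCommGroup F] [InnerProductSpace ℝ F] [CompleteSpace F]
    {T : E →ₗ.[ℝ] F} (hT : Dense (T.domain : Set E)) : T.adjoint.IsClosed := by
  have hgraph : (T.adjoint.graph : Set (F × E)) =
      ⋂ x : T.domain, {p : F × E | (inner ℝ (T x) p.1 : ℝ) = inner ℝ (x : E) p.2} := by
    ext p
    simp only [Set.mem_iInter, Set.mem_setOf_eq, SetLike.mem_coe, LinearPMap.mem_graph_iff]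
    constructor
    · rintro ⟨y, hy1, hy2⟩ x
      have h := T.adjoint_isFormalAdjoint hT y x
      rw [← hy1, ← hy2]
      exact (real_inner_comm _ _).trans (h.symm.trans (real_inner_comm _ _))
    · intro h
      have key : ∀ x : T.domain, (inner ℝ p.2 (x : E) : ℝ) = inner ℝ p.1 (T x) := fun x =>
        (real_inner_comm _ _).trans ((h x).symm.trans (real_inner_comm _ _))
      have hmem : p.1 ∈ T.adjoint.domain := mem_adjoint_domain_of_exists _ ⟨p.2, key⟩
      exact ⟨⟨p.1, hmem⟩, rfl, adjoint_apply_eq hT _ key⟩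
  show _root_.IsClosed (T.adjoint.graph : Set (F × E))
  rw [hgraph]
  exact isClosed_iInter fun x =>
    isClosed_eq (continuous_const.inner continuous_fst) (continuous_const.inner continuous_snd)

theorem LinearPMap.IsClosed.closure_eq_self {R E F : Type*} [CommRing R]
    [AddCommGroup E] [Module R E] [TopologicalSpace E] [ContinuousAdd E]
    [AddCommGroup F] [Module R F] [TopologicalSpace F] [ContinuousAdd F]
    [TopologicalSpace R] [ContinuousSMul R E] [ContinuousSMul R F]
    {f : E →ₗ.[R] F} (hf : f.IsClosed) : f.closure = f := by
  refine le_antisymm ?_ f.le_closure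
  apply LinearPMap.le_of_le_graph
  rw [← hf.isClosable.graph_closure_eq_closure_graph,
    IsClosed.submodule_topologicalClosure_eq hf]

/-- abstract sum theorem. With `Lₙ, Rₙ` bounded, `Rₙ` leaving
`dom(C) ∩ dom(D)` invariant, transmutators `[Lₙ, C+D, Rₙ]` continuous (extensions `Tₙ`),
`(C+D)* Lₙ* = (C*+D*) Lₙ*` (equality including domains), `Rₙ* → 1`, `Lₙ* → 1` strongly
and `[Lₙ, C+D, Rₙ]* → 0` strongly, one has `cl(C* + D*) = (C+D)*`. -/
theorem closure_adjoint_sum_eq_adjoint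
    {H₀ H₁ : Type*}
    [NormedAddCommGroup H₀] [InnerProductSpace ℝ H₀] [CompleteSpace H₀]
    [NormedAddCommGroup H₁] [InnerProductSpace ℝ H₁] [CompleteSpace H₁]
    (C D : H₀ →ₗ.[ℝ] H₁) (hC : C.IsClosed) (hD : D.IsClosed)
    (hCdense : Dense (C.domain : Set H₀)) (hDdense : Dense (D.domain : Set H₀))
    (hdense : Dense (((C + D).domain : Submodule ℝ H₀) : Set H₀))
    (L : ℕ → H₁ →L[ℝ] H₁) (R : ℕ → H₀ →L[ℝ] H₀)
    (hR : ∀ n : ℕ, ∀ x ∈ (C + D).domain, R n x ∈ (C + D).domain)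
    (T : ℕ → H₀ →L[ℝ] H₁)
    (hT : ∀ (n : ℕ) (x : (C + D).domain),
      T n (x : H₀) = L n ((C + D) x) - (C + D) ⟨R n x, hR n x x.2⟩)
    (hsum : ∀ (n : ℕ) (v : H₁),
      ((ContinuousLinearMap.adjoint (L n) v ∈ (C + D).adjoint.domain) ↔
        (ContinuousLinearMap.adjoint (L n) v ∈ (C.adjoint + D.adjoint).domain)) ∧
      ∀ (h₁ : ContinuousLinearMap.adjoint (L n) v ∈ (C + D).adjoint.domain)
        (h₂ : ContinuousLinearMap.adjoint (L n) v ∈ (C.adjoint + D.adjoint).domain),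
        (C + D).adjoint ⟨ContinuousLinearMap.adjoint (L n) v, h₁⟩ =
          (C.adjoint + D.adjoint) ⟨ContinuousLinearMap.adjoint (L n) v, h₂⟩)
    (hRconv : ∀ x : H₀,
      Tendsto (fun n : ℕ => ContinuousLinearMap.adjoint (R n) x) atTop (𝓝 x))
    (hLconv : ∀ v : H₁,
      Tendsto (fun n : ℕ => ContinuousLinearMap.adjoint (L n) v) atTop (𝓝 v))
    (hTconv : ∀ v : H₁,
      Tendsto (fun n : ℕ => ContinuousLinearMap.adjoint (T n) v) atTop (𝓝 0)) :
    (C.adjoint + D.adjoint).closure = (C + D).adjoint := by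
  -- the adjoint of the sum is closed
  have hclosed : (C + D).adjoint.IsClosed := LinearPMap.adjoint_isClosed_aux hdense
  -- `C* + D* ≤ (C+D)*`
  have hformal : (C + D).IsFormalAdjoint (C.adjoint + D.adjoint) := by
    intro x y
    have hx1 : (x : H₀) ∈ C.domain := x.2.1
    have hx2 : (x : H₀) ∈ D.domain := x.2.2
    have hy1 : (y : H₁) ∈ C.adjoint.domain := y.2.1
    have hy2 : (y : H₁) ∈ D.adjoint.domain := y.2.2
    have hCx := C.adjoint_isFormalAdjoint hCdense ⟨(y : H₁), hy1⟩ ⟨(x : H₀), hx1⟩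
    have hDx := D.adjoint_isFormalAdjoint hDdense ⟨(y : H₁), hy2⟩ ⟨(x : H₀), hx2⟩
    have h1 : (C + D) x = C ⟨(x : H₀), hx1⟩ + D ⟨(x : H₀), hx2⟩ := rfl
    have h2 : (C.adjoint + D.adjoint) y =
        C.adjoint ⟨(y : H₁), hy1⟩ + D.adjoint ⟨(y : H₁), hy2⟩ := rfl
    calc (inner ℝ ((C + D) x) (y : H₁) : ℝ)
        = inner ℝ (C ⟨(x : H₀), hx1⟩) (y : H₁) + inner ℝ (D ⟨(x : H₀), hx2⟩) (y : H₁) := by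
          rw [h1, inner_add_left]
      _ = (inner ℝ (C.adjoint ⟨(y : H₁), hy1⟩) (x : H₀) : ℝ)
          + inner ℝ (D.adjoint ⟨(y : H₁), hy2⟩) (x : H₀) := by
          exact congrArg₂ (· + ·) ((real_inner_comm _ _).trans hCx.symm)
            ((real_inner_comm _ _).trans hDx.symm)
      _ = inner ℝ (x : H₀) ((C.adjoint + D.adjoint) y) := by
          rw [h2, inner_add_right]
          exact congrArg₂ (· + ·) (real_inner_comm _ _) (real_inner_comm _ _)
  have hle : (C.adjoint + D.adjoint) ≤ (C + D).adjoint := hformal.le_adjoint hdense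
  have hclosable : (C.adjoint + D.adjoint).IsClosable := hclosed.isClosable.leIsClosable hle
  refine le_antisymm ?_ ?_
  · have h := hclosed.isClosable.closure_mono hle
    rwa [hclosed.closure_eq_self] at h
  · -- the hard inclusion: `(C+D)* ≤ cl(C* + D*)`
    apply LinearPMap.le_of_le_graph
    rw [← hclosable.graph_closure_eq_closure_graph]
    intro p hp
    rw [LinearPMap.mem_graph_iff] at hp
    obtain ⟨v, hv1, hv2⟩ := hp
    set w : H₀ := (C + D).adjoint v with hw
    -- the key computation
    have key : ∀ n : ℕ, ∀ x : (C + D).domain,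
        (inner ℝ (ContinuousLinearMap.adjoint (T n) (v : H₁)
            + ContinuousLinearMap.adjoint (R n) w) (x : H₀) : ℝ) =
          inner ℝ (ContinuousLinearMap.adjoint (L n) (v : H₁)) ((C + D) x) := by
      intro n x
      have hformal2 := (C + D).adjoint_isFormalAdjoint hdense v ⟨R n x, hR n x x.2⟩
      have hLx : L n ((C + D) x) = T n (x : H₀) + (C + D) ⟨R n x, hR n x x.2⟩ := by
        rw [hT n x]; abel
      rw [ContinuousLinearMap.adjoint_inner_left, hLx, inner_add_left, inner_add_right,
        ContinuousLinearMap.adjoint_inner_left, ContinuousLinearMap.adjoint_inner_left]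
      congr 1
    -- membership of `Lₙ* v` in the adjoint domain, with explicit value
    have hmem : ∀ n : ℕ, ContinuousLinearMap.adjoint (L n) (v : H₁) ∈ (C + D).adjoint.domain :=
      fun n => LinearPMap.mem_adjoint_domain_of_exists _
        ⟨ContinuousLinearMap.adjoint (T n) (v : H₁) + ContinuousLinearMap.adjoint (R n) w,
          key n⟩
    have hval : ∀ n : ℕ,
        (C + D).adjoint ⟨ContinuousLinearMap.adjoint (L n) (v : H₁), hmem n⟩ =
          ContinuousLinearMap.adjoint (T n) (v : H₁) + ContinuousLinearMap.adjoint (R n) w :=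
      fun n => LinearPMap.adjoint_apply_eq hdense _ (key n)
    -- transfer to `C* + D*` using `hsum`
    have hmem' : ∀ n : ℕ,
        ContinuousLinearMap.adjoint (L n) (v : H₁) ∈ (C.adjoint + D.adjoint).domain :=
      fun n => (hsum n (v : H₁)).1.mp (hmem n)
    have hval' : ∀ n : ℕ,
        (C.adjoint + D.adjoint) ⟨ContinuousLinearMap.adjoint (L n) (v : H₁), hmem' n⟩ =
          ContinuousLinearMap.adjoint (T n) (v : H₁) + ContinuousLinearMap.adjoint (R n) w :=
      fun n => by rw [← (hsum n (v : H₁)).2 (hmem n) (hmem' n)]; exact hval n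
    -- the approximating sequence lies in the graph
    have hgraph : ∀ n : ℕ,
        (ContinuousLinearMap.adjoint (L n) (v : H₁),
          ContinuousLinearMap.adjoint (T n) (v : H₁) + ContinuousLinearMap.adjoint (R n) w)
          ∈ (C.adjoint + D.adjoint).graph := fun n => by
      rw [LinearPMap.mem_graph_iff]
      exact ⟨⟨ContinuousLinearMap.adjoint (L n) (v : H₁), hmem' n⟩, rfl, hval' n⟩
    -- it converges to `p`
    have htend : Tendsto (fun n : ℕ =>
        (ContinuousLinearMap.adjoint (L n) (v : H₁),
          ContinuousLinearMap.adjoint (T n) (v : H₁) + ContinuousLinearMap.adjoint (R n) w))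
        atTop (𝓝 ((v : H₁), w)) := by
      refine Tendsto.prodMk_nhds (hLconv (v : H₁)) ?_
      simpa using (hTconv (v : H₁)).add (hRconv w)
    have hpv : ((v : H₁), w) = p := Prod.ext hv1 hv2
    rw [← SetLike.mem_coe, Submodule.topologicalClosure_coe, ← hpv]
    exact mem_closure_of_tendsto htend (Eventually.of_forall hgraph)
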